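/- Let u be a nonprincipal ultrafilter on ℕ and let P, Q ∈ ℤ[X] be polynomials of degree at least 1. If the image of u under the map n ↦ P(n) equals the image of u under the map n ↦ Q(n) (as ultrafilters on ℤ, where P, Q are evaluated at the natural number n viewed as an integer), then P = Q. -/

import Mathlib

open Filter Polynomial

/-- Eventually a nonzero integer polynomial has constant sign on large naturals. -/
lemma aux_sign (p : Polynomial ℤ) (hp : p ≠ 0) :
    ∃ N : ℕ, (∀ n : ℕ, N ≤ n → 0 < p.eval (n : ℤ)) ∨ (∀ n : ℕ, N ≤ n → p.eval (n : ℤ) < 0) := by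
  -- reduce to positive leading coefficient
  have key : ∀ q : Polynomial ℤ, q ≠ 0 → 0 < q.leadingCoeff →
      ∃ N : ℕ, ∀ n : ℕ, N ≤ n → 0 < q.eval (n : ℤ) := by
    intro q hq hlc
    rcases eq_or_lt_of_le (Nat.zero_le q.natDegree) with hd | hd
    · refine ⟨0, fun n _ => ?_⟩
      have : q = Polynomial.C (q.coeff 0) := Polynomial.eq_C_of_natDegree_eq_zero hd.symm
      rw [this, Polynomial.eval_C]
      have : q.leadingCoeff = q.coeff 0 := by
        rw [Polynomial.leadingCoeff, ← hd]
      rwa [this] at hlc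
    · -- degree ≥ 1, use ℝ
      set qr : Polynomial ℝ := q.map (Int.castRingHom ℝ) with hqr
      have hinj : Function.Injective (Int.castRingHom ℝ) := Int.cast_injective
      have hdeg : 0 < qr.degree := by
        rw [Polynomial.degree_map_eq_of_injective hinj]
        exact Polynomial.natDegree_pos_iff_degree_pos.mp hd
      have hlcr : 0 ≤ qr.leadingCoeff := by
        rw [Polynomial.leadingCoeff_map_of_injective hinj]
        simp only [Int.coe_castRingHom]
        exact_mod_cast hlc.le
      have ht : Tendsto (fun x : ℝ => qr.eval x) atTop atTop :=
        Polynomial.tendsto_atTop_of_leadingCoeff_nonneg qr hdeg hlcr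
      have ht2 : Tendsto (fun n : ℕ => qr.eval (n : ℝ)) atTop atTop :=
        ht.comp tendsto_natCast_atTop_atTop
      have hev : ∀ᶠ n : ℕ in atTop, (1 : ℝ) ≤ qr.eval (n : ℝ) := ht2.eventually_ge_atTop 1
      obtain ⟨N, hN⟩ := eventually_atTop.mp hev
      refine ⟨N, fun n hn => ?_⟩
      have := hN n hn
      have heq : qr.eval ((n : ℕ) : ℝ) = ((q.eval ((n : ℕ) : ℤ) : ℤ) : ℝ) := by
        rw [hqr, Polynomial.eval_map, Polynomial.eval₂_at_natCast]
        rfl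
      rw [heq] at this
      exact_mod_cast lt_of_lt_of_le zero_lt_one this
  rcases lt_trichotomy 0 p.leadingCoeff with hlc | hlc | hlc
  · obtain ⟨N, hN⟩ := key p hp hlc
    exact ⟨N, Or.inl hN⟩
  · exact absurd (Polynomial.leadingCoeff_eq_zero.mp hlc.symm) hp
  · have hneg : (0 : ℤ) < (-p).leadingCoeff := by
      rw [Polynomial.leadingCoeff_neg]; omega
    obtain ⟨N, hN⟩ := key (-p) (neg_ne_zero.mpr hp) hneg
    refine ⟨N, Or.inr fun n hn => ?_⟩
    have := hN n hn
    rw [Polynomial.eval_neg] at this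
    omega

/-- A polynomial of degree ≥ 1 is eventually injective on naturals. -/
lemma aux_inj (P : Polynomial ℤ) (hP : 1 ≤ P.natDegree) :
    ∃ N : ℕ, ∀ m n : ℕ, N ≤ m → N ≤ n → P.eval (m : ℤ) = P.eval (n : ℤ) → m = n := by
  set D : Polynomial ℤ := P.comp (Polynomial.X + Polynomial.C 1) - P with hD
  have hDeval : ∀ x : ℤ, D.eval x = P.eval (x + 1) - P.eval x := by
    intro x
    simp [hD]
  have hD0 : D ≠ 0 := by
    intro h0
    have hstep : ∀ x : ℤ, P.eval (x + 1) = P.eval x := by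
      intro x
      have := hDeval x
      rw [h0] at this
      simp at this
      omega
    have hconst : ∀ n : ℕ, P.eval (n : ℤ) = P.eval 0 := by
      intro n
      induction n with
      | zero => simp
      | succ k ih =>
        have hc : ((k + 1 : ℕ) : ℤ) = (k : ℤ) + 1 := by push_cast; ring
        rw [hc, hstep, ih]
    have hroots : {x : ℤ | (P - Polynomial.C (P.eval 0)).IsRoot x}.Infinite := by
      apply Set.Infinite.mono (s := Set.range (Nat.cast : ℕ → ℤ))
      · rintro x ⟨n, rfl⟩
        simp [Polynomial.IsRoot, hconst n]
      · exact Set.infinite_range_of_injective Nat.cast_injective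
    have hne : P - Polynomial.C (P.eval 0) ≠ 0 := by
      intro hz
      have : P = Polynomial.C (P.eval 0) := by
        have := sub_eq_zero.mp hz; exact this
      have : P.natDegree = 0 := by rw [this]; exact Polynomial.natDegree_C _
      omega
    exact hroots (Polynomial.finite_setOf_isRoot hne)
  obtain ⟨N, hN⟩ := aux_sign D hD0
  refine ⟨N, ?_⟩
  have hcast : ∀ k : ℕ, ((N + k : ℕ) : ℤ) + 1 = ((N + (k+1) : ℕ) : ℤ) := by
    intro k; push_cast; ring
  rcases hN with hpos | hneg
  · have hmono : StrictMono (fun k : ℕ => P.eval ((N + k : ℕ) : ℤ)) := by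
      apply strictMono_nat_of_lt_succ
      intro k
      have h1 := hpos (N + k) (Nat.le_add_right _ _)
      have h2 := hDeval ((N + k : ℕ) : ℤ)
      rw [hcast k] at h2
      omega
    intro m n hm hn heq
    have h1 : m = N + (m - N) := by omega
    have h2 : n = N + (n - N) := by omega
    rw [h1, h2] at heq
    have := hmono.injective heq
    omega
  · have hmono : StrictAnti (fun k : ℕ => P.eval ((N + k : ℕ) : ℤ)) := by
      apply strictAnti_nat_of_succ_lt
      intro k
      have h1 := hneg (N + k) (Nat.le_add_right _ _)
      have h2 := hDeval ((N + k : ℕ) : ℤ)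
      rw [hcast k] at h2
      omega
    intro m n hm hn heq
    have h1 : m = N + (m - N) := by omega
    have h2 : n = N + (n - N) := by omega
    rw [h1, h2] at heq
    have := hmono.injective heq
    omega

/-- Pick a color not in `s`. -/
noncomputable def auxPick (s : Finset (Fin 3)) : Fin 3 :=
  if h : (Finset.univ \ s).Nonempty then h.choose else 0

lemma auxPick_not_mem (s : Finset (Fin 3)) (hs : s.card ≤ 2) : auxPick s ∉ s := by
  have hne : (Finset.univ \ s).Nonempty := by
    rw [Finset.sdiff_nonempty]
    intro hsub
    have := Finset.card_le_card hsub
    simp [Finset.card_univ] at this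
    omega
  rw [auxPick, dif_pos hne]
  have := hne.choose_spec
  rw [Finset.mem_sdiff] at this
  exact this.2

open Classical in
/-- Greedy coloring along an enumeration. -/
noncomputable def auxCol (A : ℕ → ℕ → Prop) : ℕ → Fin 3
  | k =>
    auxPick (((Finset.range k).filter (fun j => A j k)).attach.image
      (fun j => auxCol A j.1))
  decreasing_by exact Finset.mem_range.mp (Finset.mem_filter.mp j.2).1

lemma auxCol_spec (A : ℕ → ℕ → Prop)
    (hA2 : ∀ k, ∃ a b : ℕ, ∀ j, A j k → j = a ∨ j = b) :
    ∀ j k, j < k → A j k → auxCol A j ≠ auxCol A k := by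
  intro j k hjk hA heq
  obtain ⟨a, b, hab⟩ := hA2 k
  classical
  set t := (Finset.range k).filter (fun j => A j k) with ht
  have hjt : j ∈ t := by
    rw [ht, Finset.mem_filter, Finset.mem_range]
    exact ⟨hjk, hA⟩
  have hsub : t ⊆ {a, b} := by
    intro x hx
    rcases hab x (Finset.mem_filter.mp hx).2 with h | h <;> simp [h]
  have hcard : (t.attach.image (fun j => auxCol A j.1)).card ≤ 2 := by
    calc (t.attach.image (fun j => auxCol A j.1)).card ≤ t.attach.card :=
          Finset.card_image_le
      _ = t.card := Finset.card_attach
      _ ≤ ({a, b} : Finset ℕ).card := Finset.card_le_card hsub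
      _ ≤ 2 := Finset.card_insert_le a {b} |>.trans (by simp)
  have hmem : auxCol A j ∈ t.attach.image (fun j => auxCol A j.1) :=
    Finset.mem_image.mpr ⟨⟨j, hjt⟩, Finset.mem_attach _ _, rfl⟩
  have hnot : auxCol A k ∉ t.attach.image (fun j => auxCol A j.1) := by
    rw [auxCol]
    exact auxPick_not_mem _ hcard
  rw [heq] at hmem
  exact hnot hmem

/-- If `u` is a nonprincipal ultrafilter on `ℕ` and `P, Q` are integer polynomials of
degree at least `1` with the same pushforward of `u`, then `P = Q`. -/
theorem stmt_9 (u : Ultrafilter ℕ) (hu : ∀ A : Set ℕ, A.Finite → A ∉ u)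
    (P Q : Polynomial ℤ) (hP : 1 ≤ P.natDegree) (hQ : 1 ≤ Q.natDegree)
    (h : (u.map fun n : ℕ => P.eval (n : ℤ)) = (u.map fun n : ℕ => Q.eval (n : ℤ))) :
    P = Q := by
  by_contra hPQ
  set f : ℕ → ℤ := fun n => P.eval (n : ℤ) with hf
  set g : ℕ → ℤ := fun n => Q.eval (n : ℤ) with hg
  -- eventually f n ≠ g n
  have hRne : P - Q ≠ 0 := sub_ne_zero.mpr hPQ
  have hfinset : {n : ℕ | f n = g n}.Finite := by
    have : {x : ℤ | (P - Q).IsRoot x}.Finite := Polynomial.finite_setOf_isRoot hRne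
    have hsub : {n : ℕ | f n = g n} ⊆ (Nat.cast : ℕ → ℤ) ⁻¹' {x : ℤ | (P - Q).IsRoot x} := by
      intro n hn
      simp only [Set.mem_preimage, Set.mem_setOf_eq, Polynomial.IsRoot,
        Polynomial.eval_sub]
      simp only [Set.mem_setOf_eq, hf, hg] at hn
      omega
    exact Set.Finite.subset (this.preimage Nat.cast_injective.injOn) hsub
  obtain ⟨N₃, hN₃⟩ : ∃ M : ℕ, ∀ n ∈ {n : ℕ | f n = g n}, n ≤ M := by
    obtain ⟨M, hM⟩ := hfinset.bddAbove
    exact ⟨M, fun n hn => hM hn⟩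
  obtain ⟨N₁, hN₁⟩ := aux_inj P hP
  obtain ⟨N₂, hN₂⟩ := aux_inj Q hQ
  set N : ℕ := max (max N₁ N₂) (N₃ + 1) with hN
  have hfg : ∀ n, N ≤ n → f n ≠ g n := by
    intro n hn hcon
    have := hN₃ n hcon
    omega
  have hfinj : ∀ m n, N ≤ m → N ≤ n → f m = f n → m = n := by
    intro m n hm hn
    exact hN₁ m n (le_trans (le_trans (le_max_left _ _) (le_max_left _ _)) hm)
      (le_trans (le_trans (le_max_left _ _) (le_max_left _ _)) hn)
  have hginj : ∀ m n, N ≤ m → N ≤ n → g m = g n → m = n := by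
    intro m n hm hn
    exact hN₂ m n (le_trans (le_trans (le_max_right _ _) (le_max_left _ _)) hm)
      (le_trans (le_trans (le_max_right _ _) (le_max_left _ _)) hn)
  -- adjacency on ℤ
  set Adj : ℤ → ℤ → Prop := fun x y =>
    ∃ n, N ≤ n ∧ ((f n = x ∧ g n = y) ∨ (g n = x ∧ f n = y)) with hAdj
  have hAdjSymm : ∀ x y, Adj x y → Adj y x := by
    rintro x y ⟨n, hn, ⟨h1, h2⟩ | ⟨h1, h2⟩⟩
    · exact ⟨n, hn, Or.inr ⟨h2, h1⟩⟩
    · exact ⟨n, hn, Or.inl ⟨h2, h1⟩⟩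
  have hnb : ∀ x : ℤ, ∃ a b : ℤ, ∀ y, Adj x y → y = a ∨ y = b := by
    intro x
    classical
    by_cases h1 : ∃ n, N ≤ n ∧ f n = x
    · by_cases h2 : ∃ m, N ≤ m ∧ g m = x
      · refine ⟨g h1.choose, f h2.choose, ?_⟩
        rintro y ⟨n, hn, ⟨hfx, hgy⟩ | ⟨hgx, hfy⟩⟩
        · left
          have : n = h1.choose := hfinj n h1.choose hn h1.choose_spec.1
            (hfx.trans h1.choose_spec.2.symm)
          rw [← hgy, this]
        · right
          have : n = h2.choose := hginj n h2.choose hn h2.choose_spec.1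
            (hgx.trans h2.choose_spec.2.symm)
          rw [← hfy, this]
      · refine ⟨g h1.choose, g h1.choose, ?_⟩
        rintro y ⟨n, hn, ⟨hfx, hgy⟩ | ⟨hgx, hfy⟩⟩
        · left
          have : n = h1.choose := hfinj n h1.choose hn h1.choose_spec.1
            (hfx.trans h1.choose_spec.2.symm)
          rw [← hgy, this]
        · exact absurd ⟨n, hn, hgx⟩ h2
    · by_cases h2 : ∃ m, N ≤ m ∧ g m = x
      · refine ⟨f h2.choose, f h2.choose, ?_⟩
        rintro y ⟨n, hn, ⟨hfx, hgy⟩ | ⟨hgx, hfy⟩⟩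
        · exact absurd ⟨n, hn, hfx⟩ h1
        · left
          have : n = h2.choose := hginj n h2.choose hn h2.choose_spec.1
            (hgx.trans h2.choose_spec.2.symm)
          rw [← hfy, this]
      · refine ⟨0, 0, ?_⟩
        rintro y ⟨n, hn, ⟨hfx, hgy⟩ | ⟨hgx, hfy⟩⟩
        · exact absurd ⟨n, hn, hfx⟩ h1
        · exact absurd ⟨n, hn, hgx⟩ h2
  -- enumeration and coloring
  set e : ℤ ≃ ℕ := Denumerable.eqv ℤ with he
  set A : ℕ → ℕ → Prop := fun j k => Adj (e.symm j) (e.symm k) with hA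
  have hA2 : ∀ k, ∃ a b : ℕ, ∀ j, A j k → j = a ∨ j = b := by
    intro k
    obtain ⟨a, b, hab⟩ := hnb (e.symm k)
    refine ⟨e a, e b, fun j hj => ?_⟩
    have hj' : Adj (e.symm j) (e.symm k) := hj
    rcases hab _ (hAdjSymm _ _ hj') with hh | hh
    · left; rw [← hh]; simp
    · right; rw [← hh]; simp
  set c : ℤ → Fin 3 := fun x => auxCol A (e x) with hc
  have hcol : ∀ n, N ≤ n → c (f n) ≠ c (g n) := by
    intro n hn hcon
    have hadj : Adj (f n) (g n) := ⟨n, hn, Or.inl ⟨rfl, rfl⟩⟩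
    have hne : e (f n) ≠ e (g n) := fun hh => hfg n hn (e.injective hh)
    rcases hne.lt_or_gt with hlt | hlt
    · refine auxCol_spec A hA2 _ _ hlt ?_ hcon
      show Adj (e.symm (e (f n))) (e.symm (e (g n)))
      simpa using hadj
    · refine auxCol_spec A hA2 _ _ hlt ?_ hcon.symm
      show Adj (e.symm (e (g n))) (e.symm (e (f n)))
      simpa using hAdjSymm _ _ hadj
  -- find the u-large color
  have htail : {n : ℕ | N ≤ n} ∈ u := by
    by_contra hcon
    have : {n : ℕ | N ≤ n}ᶜ ∈ u := (Ultrafilter.compl_mem_iff_notMem).mpr hcon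
    have hfin : ({n : ℕ | N ≤ n}ᶜ : Set ℕ).Finite := by
      apply Set.Finite.subset (Set.finite_Iio N)
      intro x hx
      simp only [Set.mem_compl_iff, Set.mem_setOf_eq, not_le] at hx
      exact hx
    exact hu _ hfin this
  obtain ⟨i, hi⟩ : ∃ i : Fin 3, {n : ℕ | c (f n) = i} ∈ u := by
    by_contra hcon
    push_neg at hcon
    have h0 : {n : ℕ | c (f n) = 0}ᶜ ∈ u := Ultrafilter.compl_mem_iff_notMem.mpr (hcon 0)
    have h1 : {n : ℕ | c (f n) = 1}ᶜ ∈ u := Ultrafilter.compl_mem_iff_notMem.mpr (hcon 1)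
    have h2 : {n : ℕ | c (f n) = 2}ᶜ ∈ u := Ultrafilter.compl_mem_iff_notMem.mpr (hcon 2)
    obtain ⟨n, ⟨hn0, hn1⟩, hn2⟩ := Ultrafilter.nonempty_of_mem
      (u.toFilter.inter_mem (u.toFilter.inter_mem h0 h1) h2)
    simp only [Set.mem_compl_iff, Set.mem_setOf_eq] at hn0 hn1 hn2
    have hlt := (c (f n)).isLt
    rcases (by omega : (c (f n)).val = 0 ∨ (c (f n)).val = 1 ∨ (c (f n)).val = 2) with hv | hv | hv
    · exact hn0 (by apply Fin.ext; simpa using hv)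
    · exact hn1 (by apply Fin.ext; simpa using hv)
    · exact hn2 (by apply Fin.ext; simpa using hv)
  have hmapf : (c ⁻¹' {i}) ∈ u.map f := by
    rw [Ultrafilter.mem_map]
    have heq : f ⁻¹' (c ⁻¹' {i}) = {n : ℕ | c (f n) = i} := by
      ext n; simp
    rw [heq]; exact hi
  have hmapg : (c ⁻¹' {i}) ∈ u.map g := by
    have h' : u.map f = u.map g := h
    rw [← h']
    exact hmapf
  have hgi : {n : ℕ | c (g n) = i} ∈ u := by
    have := Ultrafilter.mem_map.mp hmapg
    have heq : g ⁻¹' (c ⁻¹' {i}) = {n : ℕ | c (g n) = i} := by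
      ext n; simp
    rwa [heq] at this
  obtain ⟨n, ⟨hn1, hn2⟩, hn3⟩ := Ultrafilter.nonempty_of_mem
    (u.toFilter.inter_mem (u.toFilter.inter_mem hi hgi) htail)
  exact hcol n hn3 (hn1.trans hn2.symm)
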